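/- Let v_i be a subadditive valuation of bidder i, let x ∈ {1,…,k}, and let P_{−i} be any finitely supported probability distribution over bid sub-profiles b_{−i} of the other bidders. Under discriminatory pricing, with the allocation rule breaking ties in favor of bidder i, there exists a non-increasing bid vector b'_i with at most x nonzero entries such that E_{b_{−i}∼P_{−i}}[u_i^{v_i}(b'_i, b_{−i})] ≥ (1/2)·v_i(x) − E_{b_{−i}∼P_{−i}}[Σ_{j=1}^{x} β_j(b_{−i})]. -/

import Mathlib

open Finset MeasureTheory

noncomputable section

/-- A bid vector for an auction of `k` units: entry `j` is the `(j+1)`-st marginal bid. -/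
abbrev Bid (k : ℕ) := Fin k → ℝ

/-- Standard bid vectors: non-increasing and non-negative. -/
def StdBid {k : ℕ} (b : Bid k) : Prop :=
  (∀ j j' : Fin k, j ≤ j' → b j' ≤ b j) ∧ ∀ j, 0 ≤ b j

/-- Uniform bid vectors: a common value `c ≥ 0` on the first `q ≤ k` entries, `0` afterwards. -/
def UnifBid {k : ℕ} (b : Bid k) : Prop :=
  ∃ c : ℝ, 0 ≤ c ∧ ∃ q : ℕ, q ≤ k ∧ ∀ j : Fin k, b j = if (j : ℕ) < q then c else 0

/-- A valuation on `{0,…,k}`: zero at `0`, non-negative and non-decreasing (up to `k`). -/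
def IsValuation (k : ℕ) (v : ℕ → ℝ) : Prop :=
  v 0 = 0 ∧ (∀ x, 0 ≤ v x) ∧ ∀ x y : ℕ, x ≤ y → y ≤ k → v x ≤ v y

/-- Submodularity: non-increasing marginal values `v j - v (j-1)`. -/
def SubmodularVal (k : ℕ) (v : ℕ → ℝ) : Prop :=
  ∀ x y : ℕ, 1 ≤ x → x < y → y ≤ k → v y - v (y - 1) ≤ v x - v (x - 1)

/-- Subadditivity. -/
def SubadditiveVal (k : ℕ) (v : ℕ → ℝ) : Prop :=
  ∀ x y : ℕ, x + y ≤ k → v (x + y) ≤ v x + v y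

/-- `x` is a valid allocation for the bidding profile `b`:
all `k` units are allocated, and every winning bid is at least every losing bid. -/
def ValidAlloc {n k : ℕ} (b : Fin n → Bid k) (x : Fin n → ℕ) : Prop :=
  (∑ i, x i) = k ∧
  ∀ i i' : Fin n, ∀ j j' : Fin k, (j : ℕ) < x i → x i' ≤ (j' : ℕ) → b i' j' ≤ b i j

/-- The sum of the first `x` entries of a bid vector. -/
def winSum {k : ℕ} (b : Bid k) (x : ℕ) : ℝ :=
  ∑ j : Fin k, if (j : ℕ) < x then b j else 0

/-- No-overbidding of the bid vector `b` with respect to the valuation `v`. -/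
def NoOverbid {k : ℕ} (v : ℕ → ℝ) (b : Bid k) : Prop :=
  ∀ s : ℕ, 1 ≤ s → s ≤ k → winSum b s ≤ v s

/-- The `j`-th highest element of a multiset of reals (`j` is 1-indexed; default `0`). -/
def kthHighest (s : Multiset ℝ) (j : ℕ) : ℝ :=
  ((s.sort (· ≤ ·)).reverse).getD (j - 1) 0

/-- The multiset of all bids submitted under the profile `b`. -/
def allBids {n k : ℕ} (b : Fin n → Bid k) : Multiset ℝ :=
  (Finset.univ : Finset (Fin n × Fin k)).val.map fun p => b p.1 p.2

/-- The multiset of all bids submitted by the bidders other than `i`. -/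
def othersBids {n k : ℕ} (b : Fin n → Bid k) (i : Fin n) : Multiset ℝ :=
  ((Finset.univ : Finset (Fin n × Fin k)).filter (fun p => p.1 ≠ i)).val.map
    fun p => b p.1 p.2

/-- `β_j` (1-indexed): the `j`-th lowest among the `k` highest elements of `s`,
i.e. the `(k+1-j)`-th highest element of `s`. -/
def betaBid (k : ℕ) (s : Multiset ℝ) (j : ℕ) : ℝ := kthHighest s (k + 1 - j)

/-- `∑_{j=1}^{x} β_j(s)`. -/
def betaSum (k : ℕ) (s : Multiset ℝ) (x : ℕ) : ℝ := ∑ j ∈ Finset.Icc 1 x, betaBid k s j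

/-- The uniform price: the `(k+1)`-st highest of all submitted bids (`0` by default). -/
def price {n k : ℕ} (b : Fin n → Bid k) : ℝ := kthHighest (allBids b) (k + 1)

/-- Discriminatory-pricing utility of bidder `i` under the allocation rule `X`. -/
def uDisc {n k : ℕ} (X : (Fin n → Bid k) → Fin n → ℕ) (v : ℕ → ℝ) (i : Fin n)
    (b : Fin n → Bid k) : ℝ :=
  v (X b i) - winSum (b i) (X b i)

/-- Uniform-pricing utility of bidder `i` under the allocation rule `X`. -/
def uUnif {n k : ℕ} (X : (Fin n → Bid k) → Fin n → ℕ) (v : ℕ → ℝ) (i : Fin n)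
    (b : Fin n → Bid k) : ℝ :=
  v (X b i) - (X b i : ℝ) * price b

/-- The `x`-th entry (1-indexed) of a bid vector, with the convention that it is `0`
for `x = 0` (or `x > k`). -/
def lastWinBid {k : ℕ} (b : Bid k) (x : ℕ) : ℝ :=
  if h : 1 ≤ x ∧ x ≤ k then b ⟨x - 1, by omega⟩ else 0

/-- Social welfare of the allocation `x` under the valuation profile `v`. -/
def SW {n : ℕ} (v : Fin n → ℕ → ℝ) (x : Fin n → ℕ) : ℝ := ∑ i, v i (x i)

section kth

variable (S : Multiset ℝ)

noncomputable def descList (S : Multiset ℝ) : List ℝ := (S.sort (· ≤ ·)).reverse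

lemma descList_coe : (descList S : Multiset ℝ) = S := by
  have : (descList S).Perm (S.sort (· ≤ ·)) := List.reverse_perm _
  rw [show ((descList S : List ℝ) : Multiset ℝ) = ↑(S.sort (· ≤ ·)) from Quot.sound this,
    Multiset.sort_eq]

lemma descList_mem {a : ℝ} : a ∈ descList S ↔ a ∈ S := by
  rw [descList, List.mem_reverse, Multiset.mem_sort]

lemma descList_length : (descList S).length = Multiset.card S := by
  rw [descList, List.length_reverse, Multiset.length_sort]

lemma descList_sorted : (descList S).Pairwise (· ≥ ·) := by
  have h := Multiset.pairwise_sort S (· ≤ ·)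
  exact List.pairwise_reverse.mpr h

lemma descList_anti {i j : ℕ} (hi : i < (descList S).length) (hj : j < (descList S).length)
    (hij : i ≤ j) : (descList S)[j] ≤ (descList S)[i] := by
  rcases Nat.lt_or_ge i j with h'|h'
  · exact List.pairwise_iff_getElem.mp (descList_sorted S) i j hi hj h'
  · have : i = j := by omega
    subst this; rfl

lemma kthHighest_eq (j : ℕ) : kthHighest S j = (descList S).getD (j-1) 0 := rfl

lemma kthHighest_nonneg (hS : ∀ a ∈ S, 0 ≤ a) (j : ℕ) : 0 ≤ kthHighest S j := by
  rw [kthHighest_eq]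
  rcases Nat.lt_or_ge (j-1) (descList S).length with h|h
  · rw [List.getD_eq_getElem _ 0 h]
    exact hS _ ((descList_mem S).mp (List.getElem_mem h))
  · rw [List.getD_eq_default _ 0 h]

lemma kthHighest_anti (hS : ∀ a ∈ S, 0 ≤ a) {j j' : ℕ} (h : j ≤ j') :
    kthHighest S j' ≤ kthHighest S j := by
  rw [kthHighest_eq, kthHighest_eq]
  rcases Nat.lt_or_ge (j'-1) (descList S).length with h'|h'
  · have hjl : j - 1 < (descList S).length := by omega
    rw [List.getD_eq_getElem _ 0 h', List.getD_eq_getElem _ 0 hjl]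
    exact descList_anti S hjl h' (by omega)
  · rw [List.getD_eq_default _ 0 h']
    exact kthHighest_nonneg S hS j

/-- if fewer than `q` elements exceed `t`, the `q`-th highest is at most `t`. -/
lemma kthHighest_le (t : ℝ) (q : ℕ) (hc : (S.filter (t < ·)).card < q)
    (ht : 0 ≤ t) : kthHighest S q ≤ t := by
  classical
  have h1 : 1 ≤ q := by omega
  rw [kthHighest_eq]
  rcases Nat.lt_or_ge (q-1) (descList S).length with h|h
  · rw [List.getD_eq_getElem _ 0 h]
    by_contra hlt
    push_neg at hlt
    have hq_len : q ≤ (descList S).length := by omega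
    have hsub : ((descList S).take q : Multiset ℝ) ≤ S.filter (t < ·) := by
      refine Multiset.le_filter.2 ⟨?_, ?_⟩
      · have h2 : ((descList S).take q : Multiset ℝ) ≤ (descList S : Multiset ℝ) :=
          Multiset.coe_le.mpr (List.take_sublist q _).subperm
        rwa [descList_coe] at h2
      · intro a ha
        have ha' : a ∈ (descList S).take q := by exact_mod_cast ha
        obtain ⟨idx, hidx, rfl⟩ := List.mem_iff_getElem.mp ha'
        have hidx' : idx < q := by rw [List.length_take] at hidx; omega
        rw [List.getElem_take]
        calc t < (descList S)[q-1] := hlt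
          _ ≤ (descList S)[idx] := descList_anti S (by omega) h (by omega)
    have hcard := Multiset.card_le_card hsub
    rw [Multiset.coe_card, List.length_take] at hcard
    omega
  · rw [List.getD_eq_default _ 0 h]; exact ht

/-- if at least `j` elements are ≥ `t`, the `j`-th highest is at least `t`. -/
lemma kthHighest_ge (t : ℝ) (j : ℕ) (h1 : 1 ≤ j) (hc : j ≤ (S.filter (t ≤ ·)).card) :
    t ≤ kthHighest S j := by
  classical
  rw [kthHighest_eq]
  have hlen : j ≤ (descList S).length := by
    have h2 := Multiset.card_le_card (Multiset.filter_le (t ≤ ·) S)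
    rw [descList_length]
    omega
  rw [List.getD_eq_getElem _ 0 (by omega : j - 1 < (descList S).length)]
  by_contra hlt
  push_neg at hlt
  have hsplit : S = ((descList S).take (j-1) : Multiset ℝ) + ((descList S).drop (j-1) : Multiset ℝ) := by
    have h3 : (((descList S).take (j-1) ++ (descList S).drop (j-1) : List ℝ) : Multiset ℝ)
        = (descList S : Multiset ℝ) := by rw [List.take_append_drop]
    rw [descList_coe] at h3
    exact h3.symm
  have hdropz : Multiset.filter (t ≤ ·) (((descList S).drop (j-1) : List ℝ) : Multiset ℝ) = 0 := by
    rw [Multiset.filter_eq_nil]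
    intro a ha
    have ha' : a ∈ (descList S).drop (j-1) := by exact_mod_cast ha
    obtain ⟨idx, hidx, rfl⟩ := List.mem_iff_getElem.mp ha'
    have hidx' : j - 1 + idx < (descList S).length := by
      rw [List.length_drop] at hidx; omega
    rw [List.getElem_drop]
    have hle : (descList S)[j-1+idx] ≤ (descList S)[j-1] :=
      descList_anti S (by omega) hidx' (by omega)
    push_neg
    linarith
  have hfin : (S.filter (t ≤ ·)).card ≤ j - 1 := by
    conv_lhs => rw [hsplit]
    rw [Multiset.filter_add, Multiset.card_add, hdropz]
    simp only [Multiset.card_zero, add_zero]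
    calc (Multiset.filter (t ≤ ·) (((descList S).take (j-1) : List ℝ) : Multiset ℝ)).card
        ≤ ((((descList S).take (j-1) : List ℝ) : Multiset ℝ)).card :=
          Multiset.card_le_card (Multiset.filter_le _ _)
      _ ≤ j - 1 := by rw [Multiset.coe_card, List.length_take]; omega
  omega

end kth

section alloc
variable {n k : ℕ}

lemma count_fin (k c : ℕ) (hc : c ≤ k) :
    ∑ j : Fin k, (if (j:ℕ) < c then (1:ℕ) else 0) = c := by
  rw [Fin.sum_univ_eq_sum_range (fun j => if j < c then (1:ℕ) else 0) k]
  have hf : (Finset.range k).filter (fun j => j < c) = Finset.range c := by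
    ext j; simp only [Finset.mem_filter, Finset.mem_range]; omega
  rw [← Finset.sum_filter, hf, Finset.sum_const, smul_eq_mul, mul_one, Finset.card_range]

/-- cardinality of the set of selected positions of others. -/
lemma selected_card (b : Fin n → Bid k) (i : Fin n) (o : Fin n → ℕ) (hok : ∀ i', o i' ≤ k) :
    (Finset.univ.filter (fun p : Fin n × Fin k => p.1 ≠ i ∧ (p.2:ℕ) < o p.1)).card
      = ∑ i' ∈ Finset.univ.filter (· ≠ i), o i' := by
  classical
  rw [Finset.card_filter]
  rw [Fintype.sum_prod_type]
  rw [Finset.sum_filter]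
  refine Finset.sum_congr rfl (fun a _ => ?_)
  by_cases h : a = i
  · simp [h]
  · calc (∑ j : Fin k, if a ≠ i ∧ (j:ℕ) < o a then (1:ℕ) else 0)
        = ∑ j : Fin k, (if (j:ℕ) < o a then (1:ℕ) else 0) :=
          Finset.sum_congr rfl (fun j _ => by simp [h])
      _ = o a := count_fin k (o a) (hok a)
      _ = if a ≠ i then o a else 0 := by simp [h]

/-- othersBids filter card as a finset card. -/
lemma othersBids_filter_card (b : Fin n → Bid k) (i : Fin n) (p : ℝ → Prop) [DecidablePred p] :
    ((othersBids b i).filter p).card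
      = (Finset.univ.filter (fun q : Fin n × Fin k => q.1 ≠ i ∧ p (b q.1 q.2))).card := by
  classical
  rw [othersBids, Multiset.filter_map, Multiset.card_map, ← Multiset.countP_eq_card_filter]
  rw [Multiset.countP_eq_card_filter, ← Finset.filter_val, Finset.filter_filter]
  rfl

lemma othersBids_nonneg (b : Fin n → Bid k) (i : Fin n)
    (hb : ∀ i', i' ≠ i → StdBid (b i')) : ∀ a ∈ othersBids b i, 0 ≤ a := by
  intro a ha
  rw [othersBids, Multiset.mem_map] at ha
  obtain ⟨q, hq, rfl⟩ := ha
  rw [← Finset.mem_def, Finset.mem_filter] at hq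
  exact (hb q.1 hq.2).2 q.2

/-- selected bids are at least the `q`-th highest of the others' bids. -/
lemma sel_ge (b : Fin n → Bid k) (i : Fin n)
    (hb : ∀ i', i' ≠ i → StdBid (b i')) (o : Fin n → ℕ) (hok : ∀ i', o i' ≤ k) (q : ℕ)
    (hq : ∑ i' ∈ Finset.univ.filter (· ≠ i), o i' = q)
    (hsel : ∀ i1 i2, i1 ≠ i → i2 ≠ i → ∀ j j' : Fin k,
      (j:ℕ) < o i1 → o i2 ≤ (j':ℕ) → b i2 j' ≤ b i1 j)
    (i1 : Fin n) (h1 : i1 ≠ i) (j : Fin k) (hj : (j:ℕ) < o i1) :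
    kthHighest (othersBids b i) q ≤ b i1 j := by
  classical
  set t := b i1 j with ht
  apply kthHighest_le
  · rw [othersBids_filter_card]
    have hsub : Finset.univ.filter (fun p : Fin n × Fin k => p.1 ≠ i ∧ t < b p.1 p.2)
        ⊆ (Finset.univ.filter (fun p : Fin n × Fin k => p.1 ≠ i ∧ (p.2:ℕ) < o p.1)).erase (i1, j) := by
      intro p hp
      rw [Finset.mem_filter] at hp
      obtain ⟨-, hp1, hp2⟩ := hp
      rw [Finset.mem_erase, Finset.mem_filter]
      refine ⟨?_, Finset.mem_univ _, hp1, ?_⟩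
      · rintro rfl
        exact lt_irrefl _ hp2
      · by_contra hcon
        push_neg at hcon
        exact absurd (hsel i1 p.1 h1 hp1 j p.2 hj hcon) (by push_neg; exact hp2)
    have hmem : ((i1, j) : Fin n × Fin k) ∈
        Finset.univ.filter (fun p : Fin n × Fin k => p.1 ≠ i ∧ (p.2:ℕ) < o p.1) := by
      rw [Finset.mem_filter]; exact ⟨Finset.mem_univ _, h1, hj⟩
    have := Finset.card_le_card hsub
    rw [Finset.card_erase_of_mem hmem, selected_card b i o hok, hq] at this
    have hq1 : 1 ≤ q := by
      rw [← hq]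
      calc 1 ≤ o i1 := by omega
        _ ≤ _ := Finset.single_le_sum (fun _ _ => Nat.zero_le _)
            (by rw [Finset.mem_filter]; exact ⟨Finset.mem_univ _, h1⟩)
    omega
  · exact (hb i1 h1).2 j

/-- non-selected bids are at most the `(q+1)`-st highest of the others' bids. -/
lemma unsel_le (b : Fin n → Bid k) (i : Fin n)
    (hb : ∀ i', i' ≠ i → StdBid (b i')) (o : Fin n → ℕ) (hok : ∀ i', o i' ≤ k) (q : ℕ)
    (hq : ∑ i' ∈ Finset.univ.filter (· ≠ i), o i' = q)
    (hsel : ∀ i1 i2, i1 ≠ i → i2 ≠ i → ∀ j j' : Fin k,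
      (j:ℕ) < o i1 → o i2 ≤ (j':ℕ) → b i2 j' ≤ b i1 j)
    (i2 : Fin n) (h2 : i2 ≠ i) (j' : Fin k) (hj' : o i2 ≤ (j':ℕ)) :
    b i2 j' ≤ kthHighest (othersBids b i) (q+1) := by
  classical
  set t := b i2 j' with ht
  apply kthHighest_ge _ _ _ (by omega)
  rw [othersBids_filter_card]
  have hsub : insert ((i2, j') : Fin n × Fin k)
      (Finset.univ.filter (fun p : Fin n × Fin k => p.1 ≠ i ∧ (p.2:ℕ) < o p.1))
      ⊆ Finset.univ.filter (fun p : Fin n × Fin k => p.1 ≠ i ∧ t ≤ b p.1 p.2) := by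
    intro p hp
    rw [Finset.mem_insert] at hp
    rw [Finset.mem_filter]
    rcases hp with rfl | hp
    · exact ⟨Finset.mem_univ _, h2, le_refl _⟩
    · rw [Finset.mem_filter] at hp
      exact ⟨Finset.mem_univ _, hp.2.1, hsel p.1 i2 hp.2.1 h2 p.2 j' hp.2.2 hj'⟩
  have hnotmem : ((i2, j') : Fin n × Fin k) ∉
      Finset.univ.filter (fun p : Fin n × Fin k => p.1 ≠ i ∧ (p.2:ℕ) < o p.1) := by
    simp only [Finset.mem_filter, Finset.mem_univ, true_and, not_and]
    intro _
    show ¬ ((j':ℕ) < o i2)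
    omega
  have := Finset.card_le_card hsub
  rw [Finset.card_insert_of_notMem hnotmem, selected_card b i o hok, hq] at this
  omega

end alloc
section greedy
variable {n k : ℕ}

lemma greedy_exists (b : Fin n → Bid k) (i : Fin n) (hb : ∀ i', i' ≠ i → StdBid (b i')) :
    ∀ q : ℕ, q ≤ ∑ _i' ∈ Finset.univ.filter (· ≠ i), k →
    ∃ o : Fin n → ℕ, o i = 0 ∧ (∀ i', o i' ≤ k) ∧
      (∑ i' ∈ Finset.univ.filter (· ≠ i), o i' = q) ∧
      ∀ i1 i2, i1 ≠ i → i2 ≠ i → ∀ j j' : Fin k,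
        (j:ℕ) < o i1 → o i2 ≤ (j':ℕ) → b i2 j' ≤ b i1 j := by
  intro q
  induction q with
  | zero =>
    intro _
    exact ⟨fun _ => 0, rfl, fun _ => Nat.zero_le _, by simp, fun i1 i2 _ _ j j' hj _ => absurd hj (by simp)⟩
  | succ q ih =>
    intro hsq
    obtain ⟨o, hoi, hok, hsum, hsel⟩ := ih (by omega)
    classical
    set T := Finset.univ.filter (fun i' => i' ≠ i ∧ o i' < k) with hT
    have hTne : T.Nonempty := by
      by_contra hne
      rw [Finset.not_nonempty_iff_eq_empty] at hne
      have hall : ∀ i' ∈ Finset.univ.filter (· ≠ i), k ≤ o i' := by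
        intro i' hi'
        rw [Finset.mem_filter] at hi'
        by_contra hcon
        have : i' ∈ T := by
          rw [hT, Finset.mem_filter]
          exact ⟨Finset.mem_univ _, hi'.2, by omega⟩
        rw [hne] at this
        exact absurd this (Finset.notMem_empty _)
      have := Finset.sum_le_sum hall
      omega
    set f : Fin n → ℝ := fun i' => if h : o i' < k then b i' ⟨o i', h⟩ else 0 with hf
    obtain ⟨i0, hi0T, hmax⟩ := T.exists_max_image f hTne
    rw [hT, Finset.mem_filter] at hi0T
    obtain ⟨-, hi0ne, hi0k⟩ := hi0T
    refine ⟨Function.update o i0 (o i0 + 1), ?_, ?_, ?_, ?_⟩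
    · rw [Function.update_of_ne (Ne.symm hi0ne)]; exact hoi
    · intro i'
      rcases eq_or_ne i' i0 with rfl | hne
      · rw [Function.update_self]; omega
      · rw [Function.update_of_ne hne]; exact hok i'
    · have hmem : i0 ∈ Finset.univ.filter (· ≠ i) := by
        rw [Finset.mem_filter]; exact ⟨Finset.mem_univ _, hi0ne⟩
      rw [Finset.sum_update_of_mem hmem]
      have hsplit := Finset.sum_eq_sum_sdiff_singleton_add hmem o
      omega
    · intro i1 i2 h1 h2 j j' hj hj'
      rw [Function.update_apply] at hj hj'
      have hj'2 : o i2 ≤ (j':ℕ) := by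
        by_cases h : i2 = i0
        · rw [if_pos h] at hj'; subst h; omega
        · rwa [if_neg h] at hj'
      by_cases hcase : (j:ℕ) < o i1
      · exact hsel i1 i2 h1 h2 j j' hcase hj'2
      · have h10 : i1 = i0 := by
          by_contra h
          rw [if_neg h] at hj
          omega
        rw [if_pos h10] at hj
        have hjeq : (j:ℕ) = o i0 := by rw [h10] at hcase; omega
        have hbj : b i0 j = f i0 := by
          simp only [hf]
          rw [dif_pos hi0k]
          congr 1
          exact Fin.ext hjeq
        rw [h10]
        by_cases h : i2 = i0
        · rw [if_pos h] at hj'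
          subst h
          exact (hb i2 hi0ne).1 j j' (by rw [Fin.le_def]; omega)
        · rw [if_neg h] at hj'
          have hi2k : o i2 < k := by
            have := j'.isLt
            omega
          have hi2T : i2 ∈ T := by
            rw [hT, Finset.mem_filter]; exact ⟨Finset.mem_univ _, h2, hi2k⟩
          calc b i2 j' ≤ b i2 ⟨o i2, hi2k⟩ := (hb i2 h2).1 _ _ (by rw [Fin.le_def]; simpa using hj')
            _ = f i2 := by simp only [hf]; rw [dif_pos hi2k]
            _ ≤ f i0 := hmax i2 hi2T
            _ = b i0 j := hbj.symm

/-- Existence of a valid allocation giving exactly `m` units to bidder `i`. -/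
lemma alloc_exists (b : Fin n → Bid k) (i : Fin n) (hn : 2 ≤ n) (hk : 1 ≤ k)
    (hb : ∀ i', StdBid (b i')) (m : ℕ) (hm : m ≤ k)
    (hwin : ∀ j : Fin k, (j:ℕ) < m → kthHighest (othersBids b i) (k - m + 1) ≤ b i j)
    (hlose : ∀ j : Fin k, m ≤ (j:ℕ) → b i j ≤ kthHighest (othersBids b i) (k - m)) :
    ∃ y : Fin n → ℕ, ValidAlloc b y ∧ y i = m := by
  classical
  have hb' : ∀ i', i' ≠ i → StdBid (b i') := fun i' _ => hb i'
  have hcard : (Finset.univ.filter (· ≠ i)).card = n - 1 := by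
    rw [Finset.filter_ne', Finset.card_erase_of_mem (Finset.mem_univ _), Finset.card_univ,
      Fintype.card_fin]
  have hsum_k : ∑ _i' ∈ Finset.univ.filter (· ≠ i), k = (n-1) * k := by
    rw [Finset.sum_const, hcard, smul_eq_mul]
  obtain ⟨o, hoi, hok, hsum, hsel⟩ := greedy_exists b i hb' (k - m)
    (by rw [hsum_k]; have : 1 * k ≤ (n-1) * k := Nat.mul_le_mul_right k (by omega); omega)
  refine ⟨Function.update o i m, ⟨?_, ?_⟩, Function.update_self i m o⟩
  · rw [← Finset.add_sum_erase _ _ (Finset.mem_univ i), Function.update_self]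
    have : ∑ i' ∈ Finset.univ.erase i, Function.update o i m i'
        = ∑ i' ∈ Finset.univ.filter (· ≠ i), o i' := by
      rw [Finset.filter_ne']
      refine Finset.sum_congr rfl (fun i' hi' => ?_)
      rw [Function.update_of_ne (Finset.ne_of_mem_erase hi')]
    rw [this, hsum]
    omega
  · intro i1 i2 j j' hj hj'
    rcases eq_or_ne i1 i with rfl | h1
    · rw [Function.update_self] at hj
      rcases eq_or_ne i2 i1 with rfl | h2
      · rw [Function.update_self] at hj'
        exact (hb i2).1 j j' (by rw [Fin.le_def]; omega)
      · rw [Function.update_of_ne h2] at hj'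
        calc b i2 j' ≤ kthHighest (othersBids b i1) ((k-m)+1) :=
            unsel_le b i1 hb' o hok (k-m) hsum hsel i2 h2 j' hj'
          _ ≤ b i1 j := hwin j hj
    · rw [Function.update_of_ne h1] at hj
      rcases eq_or_ne i2 i with rfl | h2
      · rw [Function.update_self] at hj'
        calc b i2 j' ≤ kthHighest (othersBids b i2) (k - m) := hlose j' hj'
          _ ≤ b i1 j := sel_ge b i2 hb' o hok (k-m) hsum hsel i1 h1 j hj
      · rw [Function.update_of_ne h2] at hj'
        exact hsel i1 i2 h1 h2 j j' hj hj'

end greedy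
section misc

/-- an antitone property on `Icc 1 x` holds on an initial segment of length its count. -/
lemma prefix_of_antitone {x : ℕ} (Q : ℕ → Prop) [DecidablePred Q]
    (hQ : ∀ a b', a ≤ b' → Q b' → Q a) :
    ∀ j, 1 ≤ j → j ≤ ((Finset.Icc 1 x).filter Q).card → Q j := by
  intro j hj1 hjc
  by_contra hnq
  have hsub : (Finset.Icc 1 x).filter Q ⊆ Finset.Icc 1 (j-1) := by
    intro a ha
    rw [Finset.mem_filter, Finset.mem_Icc] at ha
    rw [Finset.mem_Icc]
    refine ⟨ha.1.1, ?_⟩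
    by_contra hcon
    exact hnq (hQ j a (by omega) ha.2)
  have := Finset.card_le_card hsub
  rw [Nat.card_Icc] at this
  omega

lemma not_succ_of_antitone {x : ℕ} (Q : ℕ → Prop) [DecidablePred Q]
    (hQ : ∀ a b', a ≤ b' → Q b' → Q a)
    (hlt : ((Finset.Icc 1 x).filter Q).card < x) :
    ¬ Q (((Finset.Icc 1 x).filter Q).card + 1) := by
  set m := ((Finset.Icc 1 x).filter Q).card with hm
  intro hq
  have hsub : Finset.Icc 1 (m+1) ⊆ (Finset.Icc 1 x).filter Q := by
    intro a ha
    rw [Finset.mem_Icc] at ha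
    rw [Finset.mem_filter, Finset.mem_Icc]
    exact ⟨⟨ha.1, by omega⟩, hQ a (m+1) ha.2 hq⟩
  have := Finset.card_le_card hsub
  rw [Nat.card_Icc] at this
  omega

/-- counting for two complementary antitone predicates. -/
lemma card_add_card_ge {x : ℕ} (Q1 Q2 : ℕ → Prop) [DecidablePred Q1] [DecidablePred Q2]
    (h : ∀ j, 1 ≤ j → j ≤ x → ¬ Q1 j → Q2 (x + 1 - j)) :
    x ≤ ((Finset.Icc 1 x).filter Q1).card + ((Finset.Icc 1 x).filter Q2).card := by
  classical
  have hcompl : ((Finset.Icc 1 x).filter (fun j => ¬ Q1 j)).card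
      ≤ ((Finset.Icc 1 x).filter Q2).card := by
    apply Finset.card_le_card_of_injOn (fun j => x + 1 - j)
    · intro a ha
      rw [Finset.mem_coe, Finset.mem_filter, Finset.mem_Icc] at ha
      rw [Finset.mem_coe, Finset.mem_filter, Finset.mem_Icc]
      dsimp only
      exact ⟨⟨by omega, by omega⟩, h a ha.1.1 ha.1.2 ha.2⟩
    · intro a ha b hb hab
      rw [Finset.mem_coe, Finset.mem_filter, Finset.mem_Icc] at ha hb
      have hab' : x + 1 - a = x + 1 - b := hab
      omega
  have := Finset.card_filter_add_card_filter_not (s := Finset.Icc 1 x) (p := Q1)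
  rw [Nat.card_Icc] at this
  omega

end misc
section misc2
variable {n k : ℕ}

lemma betaBid_nonneg (k : ℕ) (S : Multiset ℝ) (h : ∀ a ∈ S, 0 ≤ a) (j : ℕ) :
    0 ≤ betaBid k S j := kthHighest_nonneg S h _

lemma betaBid_mono (k : ℕ) (S : Multiset ℝ) (h : ∀ a ∈ S, 0 ≤ a) {j j' : ℕ} (hjj : j ≤ j') :
    betaBid k S j ≤ betaBid k S j' :=
  kthHighest_anti S h (by omega)

lemma othersBids_update (b : Fin n → Bid k) (i : Fin n) (g : Bid k) :
    othersBids (Function.update b i g) i = othersBids b i := by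
  unfold othersBids
  apply Multiset.map_congr rfl
  intro p hp
  rw [← Finset.mem_def, Finset.mem_filter] at hp
  rw [Function.update_of_ne hp.2]

lemma sum_bid_reindex (k x : ℕ) (hxk : x ≤ k) (g : ℕ → ℝ) :
    ∑ j : Fin k, (if (j:ℕ) < x then g (x - (j:ℕ)) else 0) = ∑ t ∈ Finset.Icc 1 x, g t := by
  rw [Fin.sum_univ_eq_sum_range (fun j => if j < x then g (x - j) else 0) k]
  have hf : (Finset.range k).filter (fun j => j < x) = Finset.range x := by
    ext j; simp only [Finset.mem_filter, Finset.mem_range]; omega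
  rw [← Finset.sum_filter, hf]
  apply Finset.sum_nbij' (i := fun j => x - j) (j := fun t => x - t)
  · intro a ha
    rw [Finset.mem_range] at ha
    rw [Finset.mem_Icc]
    omega
  · intro a ha
    rw [Finset.mem_Icc] at ha
    rw [Finset.mem_range]
    omega
  · intro a ha
    rw [Finset.mem_range] at ha
    omega
  · intro a ha
    rw [Finset.mem_Icc] at ha
    omega
  · intro a _
    rfl

lemma exists_ge_of_avg {P : Type} [Fintype P] (q : P → ℝ) (g : P → ℝ) (c : ℝ)
    (hq0 : ∀ ω, 0 ≤ q ω) (hq1 : ∑ ω, q ω = 1)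
    (h : c ≤ ∑ ω, q ω * g ω) : ∃ ω, c ≤ g ω := by
  by_contra hcon
  push_neg at hcon
  have hpos : ∃ ω, 0 < q ω := by
    by_contra hz
    push_neg at hz
    have : ∑ ω, q ω = 0 :=
      Finset.sum_eq_zero (fun ω _ => le_antisymm (hz ω) (hq0 ω))
    rw [hq1] at this
    norm_num at this
  obtain ⟨ω', hw⟩ := hpos
  have hlt : ∑ ω, q ω * g ω < ∑ ω, q ω * c := by
    apply Finset.sum_lt_sum
    · exact fun ω _ => mul_le_mul_of_nonneg_left (le_of_lt (hcon ω)) (hq0 ω)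
    · exact ⟨ω', Finset.mem_univ _, by
        exact mul_lt_mul_of_pos_left (hcon ω') hw⟩
  rw [← Finset.sum_mul, hq1, one_mul] at hlt
  linarith

end misc2
theorem stmt10 (n k : ℕ) (hk : 1 ≤ k) (i : Fin n)
    -- the subadditive valuation of bidder `i`
    (v : ℕ → ℝ) (hv : IsValuation k v) (hsa : SubadditiveVal k v)
    (x : ℕ) (hx1 : 1 ≤ x) (hxk : x ≤ k)
    -- the allocation rule; ties are broken in favor of bidder `i`
    (X : (Fin n → Bid k) → Fin n → ℕ)
    (hX : ∀ b, ValidAlloc b (X b))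
    (hfav : ∀ b y, ValidAlloc b y → y i ≤ X b i)
    -- a finitely supported distribution over the others' bid profiles
    (P : Type) [Fintype P] (q : P → ℝ)
    (hq0 : ∀ ω, 0 ≤ q ω) (hq1 : ∑ ω, q ω = 1)
    (bo : P → Fin n → Bid k)
    (hbo : ∀ ω j, j ≠ i → StdBid (bo ω j)) :
    ∃ b' : Bid k, StdBid b' ∧ (∀ j : Fin k, x ≤ (j : ℕ) → b' j = 0) ∧
      (1 / 2) * v x - (∑ ω, q ω * betaSum k (othersBids (bo ω) i) x)
        ≤ ∑ ω, q ω * uDisc X v i (Function.update (bo ω) i b') := by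
  classical
  obtain ⟨hv0, hvnn, hvmono⟩ := hv
  rcases Nat.lt_or_ge n 2 with hn1 | hn2
  · -- degenerate case : bidder `i` is alone
    have hn : n = 1 := by have := i.pos; omega
    subst hn
    refine ⟨fun _ => 0, ⟨fun _ _ _ => le_refl 0, fun _ => le_refl 0⟩, fun _ _ => rfl, ?_⟩
    have hob : ∀ ω, othersBids (bo ω) i = 0 := by
      intro ω
      unfold othersBids
      have hfe : (Finset.univ.filter (fun p : Fin 1 × Fin k => p.1 ≠ i)) = ∅ :=
        Finset.filter_false_of_mem (fun p _ => by simp [Subsingleton.elim p.1 i])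
      rw [hfe]
      rfl
    have hbetaSum0 : ∀ ω, betaSum k (othersBids (bo ω) i) x = 0 := by
      intro ω
      unfold betaSum
      apply Finset.sum_eq_zero
      intro j _
      rw [hob]
      unfold betaBid kthHighest
      rw [Multiset.sort_zero]
      rfl
    have huval : ∀ ω, uDisc X v i (Function.update (bo ω) i (fun _ => (0:ℝ))) = v k := by
      intro ω
      set bb := Function.update (bo ω) i (fun _ => (0:ℝ)) with hbbdef
      have hXk : X bb i = k := by
        have h1 := (hX bb).1
        rw [Fintype.sum_subsingleton (X bb) i] at h1
        exact h1
      unfold uDisc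
      rw [hXk]
      have hws : winSum (bb i) k = 0 := by
        unfold winSum
        apply Finset.sum_eq_zero
        intro j _
        have hbbi : bb i = fun _ => (0:ℝ) := by rw [hbbdef, Function.update_self]
        rw [hbbi]
        simp
      rw [hws, sub_zero]
    have h1 : ∑ ω, q ω * betaSum k (othersBids (bo ω) i) x = 0 :=
      Finset.sum_eq_zero (fun ω _ => by rw [hbetaSum0, mul_zero])
    have h2 : ∑ ω, q ω * uDisc X v i (Function.update (bo ω) i (fun _ => (0:ℝ))) = v k := by
      rw [Finset.sum_congr rfl (fun ω _ => by rw [huval ω])]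
      rw [← Finset.sum_mul, hq1, one_mul]
    rw [h1, h2]
    have h3 := hvmono x k hxk le_rfl
    have h4 := hvnn x
    linarith
  · -- main case : at least two bidders
    set S : P → Multiset ℝ := fun ω => othersBids (bo ω) i with hS
    have hSnn : ∀ ω, ∀ a ∈ S ω, 0 ≤ a :=
      fun ω => othersBids_nonneg (bo ω) i (fun i' h => hbo ω i' h)
    set β : P → ℕ → ℝ := fun ω j => betaBid k (S ω) j with hβ
    have hβnn : ∀ ω j, 0 ≤ β ω j := fun ω j => betaBid_nonneg k (S ω) (hSnn ω) j
    have hβmono : ∀ ω {j j' : ℕ}, j ≤ j' → β ω j ≤ β ω j' :=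
      fun ω {j j'} h => betaBid_mono k (S ω) (hSnn ω) h
    set bid : P → Bid k := fun ω₀ j => if (j:ℕ) < x then β ω₀ (x - (j:ℕ)) else 0 with hbid
    have hbidStd : ∀ ω₀, StdBid (bid ω₀) := by
      intro ω₀
      constructor
      · intro j j' hjj'
        simp only [hbid]
        by_cases h1 : (j':ℕ) < x
        · rw [if_pos h1, if_pos (by rw [Fin.le_def] at hjj'; omega)]
          exact hβmono ω₀ (by rw [Fin.le_def] at hjj'; omega)
        · rw [if_neg h1]
          by_cases h2 : (j:ℕ) < x
          · rw [if_pos h2]; exact hβnn ω₀ _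
          · rw [if_neg h2]
      · intro j
        simp only [hbid]
        by_cases h2 : (j:ℕ) < x
        · rw [if_pos h2]; exact hβnn ω₀ _
        · rw [if_neg h2]
    have hbidzero : ∀ ω₀, ∀ j : Fin k, x ≤ (j:ℕ) → bid ω₀ j = 0 := by
      intro ω₀ j hj
      simp only [hbid]
      rw [if_neg (by omega)]
    set m : P → P → ℕ := fun ω₀ ω =>
      ((Finset.Icc 1 x).filter (fun j => β ω j ≤ β ω₀ (x+1-j))).card with hm
    have hm_le : ∀ ω₀ ω, m ω₀ ω ≤ x := by
      intro ω₀ ω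
      simp only [hm]
      calc ((Finset.Icc 1 x).filter (fun j => β ω j ≤ β ω₀ (x+1-j))).card
          ≤ (Finset.Icc 1 x).card := Finset.card_le_card (Finset.filter_subset _ _)
        _ = x := by rw [Nat.card_Icc]; omega
    have hanti : ∀ ω₀ ω, ∀ a b', a ≤ b' → (β ω b' ≤ β ω₀ (x+1-b')) → β ω a ≤ β ω₀ (x+1-a) := by
      intro ω₀ ω a b' hab h
      calc β ω a ≤ β ω b' := hβmono ω hab
        _ ≤ β ω₀ (x+1-b') := h
        _ ≤ β ω₀ (x+1-a) := hβmono ω₀ (by omega)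
    have hP : ∀ ω₀ ω j, 1 ≤ j → j ≤ m ω₀ ω → β ω j ≤ β ω₀ (x+1-j) := by
      intro ω₀ ω j h1 h2
      exact prefix_of_antitone _ (hanti ω₀ ω) j h1 (by simp only [hm] at h2; exact h2)
    have hNP : ∀ ω₀ ω, m ω₀ ω < x → ¬ (β ω (m ω₀ ω + 1) ≤ β ω₀ (x+1-(m ω₀ ω + 1))) := by
      intro ω₀ ω hlt
      have := not_succ_of_antitone _ (hanti ω₀ ω) (by simp only [hm] at hlt; exact hlt)
      simp only [hm]
      exact this
    have hmm : ∀ ω₀ ω, x ≤ m ω₀ ω + m ω ω₀ := by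
      intro ω₀ ω
      simp only [hm]
      apply card_add_card_ge
      intro j h1 h2 hnq
      push_neg at hnq
      rw [show x+1-(x+1-j) = j from by omega]
      exact le_of_lt hnq
    -- key pointwise estimate
    have key : ∀ ω₀ ω, v (m ω₀ ω) - betaSum k (S ω₀) x
        ≤ uDisc X v i (Function.update (bo ω) i (bid ω₀)) := by
      intro ω₀ ω
      set bb := Function.update (bo ω) i (bid ω₀) with hbb
      have hbbStd : ∀ i', StdBid (bb i') := by
        intro i'
        rcases eq_or_ne i' i with rfl|h
        · rw [hbb, Function.update_self]; exact hbidStd ω₀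
        · rw [hbb, Function.update_of_ne h]; exact hbo ω i' h
      have hOB : othersBids bb i = S ω := by
        simp only [hbb, hS]
        exact othersBids_update (bo ω) i (bid ω₀)
      have hbbi : bb i = bid ω₀ := by rw [hbb]; exact Function.update_self i (bid ω₀) (bo ω)
      have hmlek : m ω₀ ω ≤ k := le_trans (hm_le ω₀ ω) hxk
      have halloc : ∃ y, ValidAlloc bb y ∧ y i = m ω₀ ω := by
        apply alloc_exists bb i hn2 hk hbbStd (m ω₀ ω) hmlek
        · -- winning bids of i dominate
          intro j hj
          rw [hOB, hbbi]
          have h1 : 1 ≤ m ω₀ ω := by omega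
          have hPm := hP ω₀ ω (m ω₀ ω) h1 le_rfl
          have hjx : (j:ℕ) < x := by have := hm_le ω₀ ω; omega
          have hb1 : bid ω₀ j = β ω₀ (x - (j:ℕ)) := by simp only [hbid]; rw [if_pos hjx]
          rw [hb1]
          have heq : kthHighest (S ω) (k - m ω₀ ω + 1) = β ω (m ω₀ ω) := by
            simp only [hβ]
            unfold betaBid
            rw [show k + 1 - m ω₀ ω = k - m ω₀ ω + 1 from by omega]
          rw [heq]
          calc β ω (m ω₀ ω) ≤ β ω₀ (x+1-(m ω₀ ω)) := hPm
            _ ≤ β ω₀ (x - (j:ℕ)) := hβmono ω₀ (by omega)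
        · -- losing bids of i are dominated
          intro j hj
          rw [hOB, hbbi]
          have heq : kthHighest (S ω) (k - m ω₀ ω) = β ω (m ω₀ ω + 1) := by
            simp only [hβ]
            unfold betaBid
            rw [show k + 1 - (m ω₀ ω + 1) = k - m ω₀ ω from by omega]
          rw [heq]
          by_cases hjx : (j:ℕ) < x
          · have hmmx : m ω₀ ω < x := by omega
            have hnp := hNP ω₀ ω hmmx
            push_neg at hnp
            have hb1 : bid ω₀ j = β ω₀ (x - (j:ℕ)) := by simp only [hbid]; rw [if_pos hjx]
            rw [hb1]
            calc β ω₀ (x - (j:ℕ)) ≤ β ω₀ (x - m ω₀ ω) := hβmono ω₀ (by omega)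
              _ = β ω₀ (x+1-(m ω₀ ω + 1)) := by rw [show x - m ω₀ ω = x+1-(m ω₀ ω + 1) from by omega]
              _ ≤ β ω (m ω₀ ω + 1) := le_of_lt hnp
          · have hb1 : bid ω₀ j = 0 := by simp only [hbid]; rw [if_neg hjx]
            rw [hb1]
            exact hβnn ω _
      obtain ⟨y, hy, hyi⟩ := halloc
      have hfavX := hfav bb y hy
      rw [hyi] at hfavX
      have hXk : X bb i ≤ k := by
        have h1 := (hX bb).1
        calc X bb i ≤ ∑ i', X bb i' :=
            Finset.single_le_sum (fun _ _ => Nat.zero_le _) (Finset.mem_univ i)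
          _ = k := h1
      have hval : v (m ω₀ ω) ≤ v (X bb i) := hvmono _ _ hfavX hXk
      have hpay : winSum (bb i) (X bb i) ≤ betaSum k (S ω₀) x := by
        rw [hbbi]
        unfold winSum
        calc ∑ j : Fin k, (if (j:ℕ) < X bb i then bid ω₀ j else 0)
            ≤ ∑ j : Fin k, bid ω₀ j := by
              apply Finset.sum_le_sum
              intro j _
              by_cases h : (j:ℕ) < X bb i
              · rw [if_pos h]
              · rw [if_neg h]; exact (hbidStd ω₀).2 j
          _ = ∑ t ∈ Finset.Icc 1 x, β ω₀ t := by
              simp only [hbid]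
              exact sum_bid_reindex k x hxk (β ω₀)
          _ = betaSum k (S ω₀) x := by
              unfold betaSum
              simp only [hβ]
      unfold uDisc
      have := sub_le_sub hval hpay
      linarith [this]
    -- take expectations
    have hG : ∀ ω₀, (∑ ω, q ω * v (m ω₀ ω)) - betaSum k (S ω₀) x
        ≤ ∑ ω, q ω * uDisc X v i (Function.update (bo ω) i (bid ω₀)) := by
      intro ω₀
      have h1 : ∑ ω, q ω * (v (m ω₀ ω) - betaSum k (S ω₀) x)
          ≤ ∑ ω, q ω * uDisc X v i (Function.update (bo ω) i (bid ω₀)) :=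
        Finset.sum_le_sum (fun ω _ => mul_le_mul_of_nonneg_left (key ω₀ ω) (hq0 ω))
      have h2 : ∑ ω, q ω * (v (m ω₀ ω) - betaSum k (S ω₀) x)
          = (∑ ω, q ω * v (m ω₀ ω)) - betaSum k (S ω₀) x := by
        rw [Finset.sum_congr rfl (fun ω _ => mul_sub (q ω) _ _), Finset.sum_sub_distrib,
          ← Finset.sum_mul, hq1, one_mul]
      linarith
    -- the symmetrization bound
    have hA : v x ≤ 2 * ∑ ω₀, q ω₀ * (∑ ω, q ω * v (m ω₀ ω)) := by
      have hform : ∀ g : P → P → ℕ, ∑ ω₀, q ω₀ * (∑ ω, q ω * v (g ω₀ ω))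
          = ∑ ω₀, ∑ ω, (q ω₀ * q ω) * v (g ω₀ ω) := by
        intro g
        apply Finset.sum_congr rfl
        intro ω₀ _
        rw [Finset.mul_sum]
        apply Finset.sum_congr rfl
        intro ω _
        ring
      have hswap : ∑ ω₀, ∑ ω, (q ω₀ * q ω) * v (m ω₀ ω)
          = ∑ ω₀, ∑ ω, (q ω₀ * q ω) * v (m ω ω₀) := by
        rw [Finset.sum_comm]
        apply Finset.sum_congr rfl
        intro a _
        apply Finset.sum_congr rfl
        intro b _
        ring_nf
      have hpt : ∀ ω₀ ω, v x ≤ v (m ω₀ ω) + v (m ω ω₀) := by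
        intro ω₀ ω
        have h1 := hmm ω₀ ω
        have h2 : v x ≤ v (m ω₀ ω) + v (x - m ω₀ ω) := by
          have h3 := hsa (m ω₀ ω) (x - m ω₀ ω) (by have := hm_le ω₀ ω; omega)
          rw [show m ω₀ ω + (x - m ω₀ ω) = x from by have := hm_le ω₀ ω; omega] at h3
          exact h3
        have h4 : v (x - m ω₀ ω) ≤ v (m ω ω₀) :=
          hvmono _ _ (by omega) (le_trans (hm_le ω ω₀) hxk)
        linarith
      have hsum : ∑ ω₀, ∑ ω, (q ω₀ * q ω) * v x
          ≤ ∑ ω₀, ∑ ω, (q ω₀ * q ω) * (v (m ω₀ ω) + v (m ω ω₀)) := by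
        apply Finset.sum_le_sum
        intro ω₀ _
        apply Finset.sum_le_sum
        intro ω _
        exact mul_le_mul_of_nonneg_left (hpt ω₀ ω) (mul_nonneg (hq0 ω₀) (hq0 ω))
      have hW : ∑ ω₀, ∑ ω, (q ω₀ * q ω) * v x = v x := by
        rw [Finset.sum_congr rfl (fun ω₀ _ => by
          rw [show (∑ ω, (q ω₀ * q ω) * v x) = q ω₀ * ((∑ ω, q ω) * v x) from by
            rw [Finset.sum_mul, Finset.mul_sum]
            apply Finset.sum_congr rfl
            intro ω _
            ring])]
        rw [hq1, one_mul, ← Finset.sum_mul, hq1, one_mul]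
      have hsplit : ∑ ω₀, ∑ ω, (q ω₀ * q ω) * (v (m ω₀ ω) + v (m ω ω₀))
          = (∑ ω₀, ∑ ω, (q ω₀ * q ω) * v (m ω₀ ω))
            + ∑ ω₀, ∑ ω, (q ω₀ * q ω) * v (m ω ω₀) := by
        rw [← Finset.sum_add_distrib]
        apply Finset.sum_congr rfl
        intro ω₀ _
        rw [← Finset.sum_add_distrib]
        apply Finset.sum_congr rfl
        intro ω _
        ring
      rw [hform]
      calc v x = ∑ ω₀, ∑ ω, (q ω₀ * q ω) * v x := hW.symm
        _ ≤ ∑ ω₀, ∑ ω, (q ω₀ * q ω) * (v (m ω₀ ω) + v (m ω ω₀)) := hsum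
        _ = (∑ ω₀, ∑ ω, (q ω₀ * q ω) * v (m ω₀ ω))
            + ∑ ω₀, ∑ ω, (q ω₀ * q ω) * v (m ω ω₀) := hsplit
        _ = 2 * ∑ ω₀, ∑ ω, (q ω₀ * q ω) * v (m ω₀ ω) := by
            rw [← hswap]; ring
    -- average over ω₀
    have havg : (1/2) * v x - (∑ ω, q ω * betaSum k (S ω) x)
        ≤ ∑ ω₀, q ω₀ * (∑ ω, q ω * uDisc X v i (Function.update (bo ω) i (bid ω₀))) := by
      have h1 : ∑ ω₀, q ω₀ * ((∑ ω, q ω * v (m ω₀ ω)) - betaSum k (S ω₀) x)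
          ≤ ∑ ω₀, q ω₀ * (∑ ω, q ω * uDisc X v i (Function.update (bo ω) i (bid ω₀))) :=
        Finset.sum_le_sum (fun ω₀ _ => mul_le_mul_of_nonneg_left (hG ω₀) (hq0 ω₀))
      have h2 : ∑ ω₀, q ω₀ * ((∑ ω, q ω * v (m ω₀ ω)) - betaSum k (S ω₀) x)
          = (∑ ω₀, q ω₀ * (∑ ω, q ω * v (m ω₀ ω))) - ∑ ω₀, q ω₀ * betaSum k (S ω₀) x := by
        rw [Finset.sum_congr rfl (fun ω₀ _ => mul_sub (q ω₀) _ _), Finset.sum_sub_distrib]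
      have h3 : ∑ ω₀, q ω₀ * betaSum k (S ω₀) x = ∑ ω, q ω * betaSum k (S ω) x := rfl
      rw [h2, h3] at h1
      linarith
    obtain ⟨ω₀, hω₀⟩ := exists_ge_of_avg q
      (fun ω₀ => ∑ ω, q ω * uDisc X v i (Function.update (bo ω) i (bid ω₀)))
      ((1/2) * v x - (∑ ω, q ω * betaSum k (S ω) x)) hq0 hq1 havg
    exact ⟨bid ω₀, hbidStd ω₀, hbidzero ω₀, hω₀⟩

end
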